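/- Let R be a commutative ring with unity, let n₁, …, n_l be positive integers with n = n₁ + ⋯ + n_l, and let a₁, …, a_l ∈ R be such that aᵢ − aⱼ is a unit of R for all i ≠ j. For each i let Aᵢ be an upper triangular nᵢ×nᵢ matrix over R all of whose diagonal entries equal aᵢ, and let A be the block diagonal matrix with blocks A₁, …, A_l. Then an invertible n×n matrix g over R commutes with A if and only if g is block diagonal, g = diag(g₁, …, g_l), where each gᵢ is an invertible nᵢ×nᵢ matrix commuting with Aᵢ. In other words, Z_{GLₙ(R)}(A) = Z_{GL_{n₁}(R)}(A₁) ⊕ ⋯ ⊕ Z_{GL_{n_l}(R)}(A_l). -/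

import Mathlib

open Matrix


private lemma sylv {R : Type*} [CommRing R] {n m : ℕ} {u : R} (hu : IsUnit u)
    {N : Matrix (Fin n) (Fin n) R} (hN : ∀ k q : Fin n, q ≤ k → N k q = 0)
    {M : Matrix (Fin m) (Fin m) R} (hM : ∀ q p : Fin m, p ≤ q → M q p = 0)
    {X : Matrix (Fin n) (Fin m) R}
    (hX : ∀ k p, u * X k p = (X * M) k p - (N * X) k p) :
    X = 0 := by
  suffices h : ∀ c (k : Fin n) (p : Fin m), p.val + (n - k.val) ≤ c → X k p = 0 by
    ext k p; exact h _ k p le_rfl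
  intro c
  induction c using Nat.strong_induction_on with
  | _ c ih =>
    intro k p hc
    have h1 : (X * M) k p = 0 := by
      rw [mul_apply]; apply Finset.sum_eq_zero; intro q _
      rcases le_or_gt p q with h | h
      · rw [hM q p h, mul_zero]
      · have hq : q.val < p.val := h
        rw [ih (q.val + (n - k.val)) (by omega) k q le_rfl, zero_mul]
    have h2 : (N * X) k p = 0 := by
      rw [mul_apply]; apply Finset.sum_eq_zero; intro q _
      rcases le_or_gt q k with h | h
      · rw [hN k q h, zero_mul]
      · have hq : k.val < q.val := h
        have hq2 : q.val < n := q.isLt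
        rw [ih (p.val + (n - q.val)) (by omega) q p le_rfl, mul_zero]
    have := hX k p
    rw [h1, h2, sub_zero] at this
    exact (IsUnit.mul_right_eq_zero hu).mp this

private lemma mul_bd_apply {R : Type*} [CommRing R] {l : ℕ} {ni : Fin l → ℕ}
    (X : Matrix ((i : Fin l) × Fin (ni i)) ((i : Fin l) × Fin (ni i)) R)
    (A : ∀ i, Matrix (Fin (ni i)) (Fin (ni i)) R)
    (i j : Fin l) (k : Fin (ni i)) (p : Fin (ni j)) :
    (X * blockDiagonal' A) ⟨i,k⟩ ⟨j,p⟩ = ∑ q, X ⟨i,k⟩ ⟨j,q⟩ * A j q p := by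
  rw [mul_apply, ← Finset.univ_sigma_univ, Finset.sum_sigma]
  rw [Finset.sum_eq_single j]
  · simp
  · intro b _ hb
    apply Finset.sum_eq_zero; intro q _
    rw [blockDiagonal'_apply_ne _ _ _ hb, mul_zero]
  · simp

private lemma bd_mul_apply {R : Type*} [CommRing R] {l : ℕ} {ni : Fin l → ℕ}
    (X : Matrix ((i : Fin l) × Fin (ni i)) ((i : Fin l) × Fin (ni i)) R)
    (A : ∀ i, Matrix (Fin (ni i)) (Fin (ni i)) R)
    (i j : Fin l) (k : Fin (ni i)) (p : Fin (ni j)) :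
    (blockDiagonal' A * X) ⟨i,k⟩ ⟨j,p⟩ = ∑ q, A i k q * X ⟨i,q⟩ ⟨j,p⟩ := by
  rw [mul_apply, ← Finset.univ_sigma_univ, Finset.sum_sigma]
  rw [Finset.sum_eq_single i]
  · simp
  · intro b _ hb
    apply Finset.sum_eq_zero; intro q _
    rw [blockDiagonal'_apply_ne _ _ _ (Ne.symm hb), zero_mul]
  · simp


/-- Let `R` be a commutative ring, `n₁, …, n_l` positive integers, and
`a₁, …, a_l ∈ R` with `aᵢ - aⱼ` a unit for `i ≠ j`.  Let `Aᵢ` be an upper triangular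
`nᵢ × nᵢ` matrix with all diagonal entries `aᵢ`, and let `A` be the block diagonal
matrix with blocks `A₁, …, A_l`.  Then an invertible matrix `g` commutes with `A` if
and only if `g` is block diagonal with blocks `gᵢ` invertible and commuting with
`Aᵢ`; i.e. `Z_{GLₙ(R)}(A) = ⊕ᵢ Z_{GL_{nᵢ}(R)}(Aᵢ)`. -/
theorem centralizer_blockDiagonal_upperTriangular
    {R : Type*} [CommRing R] {l : ℕ} (ni : Fin l → ℕ) (hni : ∀ i, 0 < ni i)
    (a : Fin l → R) (ha : ∀ i j, i ≠ j → IsUnit (a i - a j))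
    (A : ∀ i, Matrix (Fin (ni i)) (Fin (ni i)) R)
    (hA : ∀ i, (A i).BlockTriangular id)
    (hAdiag : ∀ i k, A i k k = a i)
    (g : GL ((i : Fin l) × Fin (ni i)) R) :
    ((↑g : Matrix ((i : Fin l) × Fin (ni i)) ((i : Fin l) × Fin (ni i)) R) *
        Matrix.blockDiagonal' A =
      Matrix.blockDiagonal' A * (↑g : Matrix ((i : Fin l) × Fin (ni i)) ((i : Fin l) × Fin (ni i)) R)) ↔
      ∃ gs : ∀ i, GL (Fin (ni i)) R,
        (∀ i, (↑(gs i) : Matrix (Fin (ni i)) (Fin (ni i)) R) * A i =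
            A i * (↑(gs i) : Matrix (Fin (ni i)) (Fin (ni i)) R)) ∧
          (↑g : Matrix ((i : Fin l) × Fin (ni i)) ((i : Fin l) × Fin (ni i)) R) =
            Matrix.blockDiagonal' (fun i => ↑(gs i)) := by
  constructor
  · intro hcomm
    -- any matrix commuting with blockDiagonal' A is block diagonal
    have key : ∀ (X : Matrix ((i : Fin l) × Fin (ni i)) ((i : Fin l) × Fin (ni i)) R),
        X * blockDiagonal' A = blockDiagonal' A * X →
        X = blockDiagonal' (fun i => (fun k p => X ⟨i,k⟩ ⟨i,p⟩ : Matrix (Fin (ni i)) (Fin (ni i)) R)) := by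
      intro X hX
      have hoff : ∀ (i j : Fin l), i ≠ j → ∀ (k : Fin (ni i)) (p : Fin (ni j)),
          X ⟨i,k⟩ ⟨j,p⟩ = 0 := by
        intro i j hij k p
        set Y : Matrix (Fin (ni i)) (Fin (ni j)) R := fun k p => X ⟨i,k⟩ ⟨j,p⟩ with hY
        have hYcom : Y * A j = A i * Y := by
          ext k' p'
          have := congrFun (congrFun hX ⟨i,k'⟩) ⟨j,p'⟩
          rw [mul_bd_apply _ A, bd_mul_apply _ A] at this
          simp only [mul_apply]; simpa [hY] using this
        have hz : Y = 0 := by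
          apply sylv (ha i j hij)
            (N := A i - a i • (1 : Matrix (Fin (ni i)) (Fin (ni i)) R))
            (M := A j - a j • (1 : Matrix (Fin (ni j)) (Fin (ni j)) R)) ?_ ?_ (X := Y) ?_
          · intro k q hle
            rcases eq_or_lt_of_le hle with h | h
            · subst h; simp [hAdiag]
            · have : A i k q = 0 := hA i h
              simp [this, one_apply, (Fin.ne_of_lt h).symm]
          · intro q p hle
            rcases eq_or_lt_of_le hle with h | h
            · subst h; simp [hAdiag]
            · have : A j q p = 0 := hA j h
              simp [this, one_apply, (Fin.ne_of_lt h).symm]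
          · intro k' p'
            have e := congrFun (congrFun hYcom k') p'
            simp only [Matrix.mul_sub, Matrix.sub_mul, Matrix.sub_apply, Matrix.mul_smul,
              Matrix.smul_mul, Matrix.smul_apply, Matrix.mul_one, Matrix.one_mul, smul_eq_mul]
            rw [e]
            ring
        exact congrFun (congrFun hz k) p
      ext ⟨i, k⟩ ⟨j, p⟩
      by_cases h : i = j
      · subst h; exact (blockDiagonal'_apply_eq (α := R) (fun i => (fun k p => X ⟨i,k⟩ ⟨i,p⟩ : Matrix (Fin (ni i)) (Fin (ni i)) R)) i k p).symm
      · exact (hoff i j h k p).trans (blockDiagonal'_apply_ne (α := R) (fun i => (fun k p => X ⟨i,k⟩ ⟨i,p⟩ : Matrix (Fin (ni i)) (Fin (ni i)) R)) k p h).symm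
    set Gm : Matrix ((i : Fin l) × Fin (ni i)) ((i : Fin l) × Fin (ni i)) R := ↑g with hGm
    set Hm : Matrix ((i : Fin l) × Fin (ni i)) ((i : Fin l) × Fin (ni i)) R := ↑g⁻¹ with hHm
    have h1 : Hm * Gm = 1 := by
      rw [hGm, hHm, ← Units.val_mul]; simp
    have h2 : Gm * Hm = 1 := by
      rw [hGm, hHm, ← Units.val_mul]; simp
    have hinv : Hm * blockDiagonal' A = blockDiagonal' A * Hm := by
      calc Hm * blockDiagonal' A
          = Hm * blockDiagonal' A * (Gm * Hm) := by rw [h2, mul_one]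
        _ = Hm * (blockDiagonal' A * Gm) * Hm := by noncomm_ring
        _ = Hm * (Gm * blockDiagonal' A) * Hm := by rw [hcomm]
        _ = (Hm * Gm) * (blockDiagonal' A * Hm) := by noncomm_ring
        _ = blockDiagonal' A * Hm := by rw [h1, one_mul]
    set G : ∀ i, Matrix (Fin (ni i)) (Fin (ni i)) R :=
      fun i k p => Gm ⟨i,k⟩ ⟨i,p⟩ with hG
    set H : ∀ i, Matrix (Fin (ni i)) (Fin (ni i)) R :=
      fun i k p => Hm ⟨i,k⟩ ⟨i,p⟩ with hH
    have hgbd := key _ hcomm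
    have hgibd := key _ hinv
    have hGH : ∀ i, G i * H i = 1 := by
      have : blockDiagonal' (fun i => G i * H i) = blockDiagonal' (1 : ∀ i, Matrix (Fin (ni i)) (Fin (ni i)) R) := by
        rw [blockDiagonal'_mul, ← hgbd, ← hgibd, h2, blockDiagonal'_one]
      exact fun i => congrFun (blockDiagonal'_injective this) i
    have hHG : ∀ i, H i * G i = 1 := by
      have : blockDiagonal' (fun i => H i * G i) = blockDiagonal' (1 : ∀ i, Matrix (Fin (ni i)) (Fin (ni i)) R) := by
        rw [blockDiagonal'_mul, ← hgbd, ← hgibd, h1, blockDiagonal'_one]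
      exact fun i => congrFun (blockDiagonal'_injective this) i
    refine ⟨fun i => ⟨G i, H i, hGH i, hHG i⟩, ?_, hgbd⟩
    intro i
    ext k p
    have := congrFun (congrFun hcomm ⟨i,k⟩) ⟨i,p⟩
    rw [mul_bd_apply _ A, bd_mul_apply _ A] at this
    simp only [mul_apply]; simpa [hG] using this
  · rintro ⟨gs, hcommgs, hg⟩
    rw [hg, ← blockDiagonal'_mul, ← blockDiagonal'_mul]
    exact congrArg _ (funext fun i => hcommgs i)
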